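/- For every ε > 0 there exists δ > 0 with the following property: if Q : [0,1] → [0,1] is an increasing homeomorphism with Q(0) = 0 and Q(1) = 1 which is M-quasisymmetric for some M ≤ 1 + δ, meaning M⁻¹ ≤ (Q(x+t) − Q(x))/(Q(x) − Q(x−t)) ≤ M whenever x−t, x, x+t ∈ [0,1] and t > 0, then |Q(x) − x| ≤ ε for all x ∈ [0,1]. -/

import Mathlib

/-- Arithmetic facts about the midpoint gap `u` of an interval of length `L`
under `M`-quasisymmetry with `1 ≤ M ≤ 2`. -/
lemma qs_midarith (M L u : ℝ) (hM1 : 1 ≤ M) (hM2 : M ≤ 2) (hL0 : 0 ≤ L)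
    (hu0 : 0 ≤ u) (G1 : L ≤ u * (1 + M)) (G2 : u * (1 + M) ≤ M * L) :
    u ≤ (2/3) * L ∧ L - u ≤ (2/3) * L ∧
      u - L/2 ≤ (M-1) * L / 2 ∧ L/2 - u ≤ (M-1) * L / 2 := by
  refine ⟨?_, ?_, ?_, ?_⟩
  · nlinarith [mul_nonneg (show (0:ℝ) ≤ 2 - M by linarith) hL0]
  · nlinarith [mul_nonneg hu0 (show (0:ℝ) ≤ 2 - M by linarith)]
  · nlinarith [mul_nonneg (mul_nonneg (show (0:ℝ) ≤ M - 1 by linarith)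
      (show (0:ℝ) ≤ M by linarith)) hL0]
  · nlinarith [mul_nonneg (mul_nonneg (show (0:ℝ) ≤ M - 1 by linarith)
      (show (0:ℝ) ≤ M by linarith)) hL0]

set_option maxHeartbeats 1600000 in
/-- For every ε > 0 there exists δ > 0 such that any increasing
homeomorphism `Q` of `[0,1]` fixing `0` and `1` which is `M`-quasisymmetric for
some `M ≤ 1 + δ` satisfies `|Q x - x| ≤ ε` on `[0,1]`. -/
theorem stmt_0 :
    ∀ ε : ℝ, 0 < ε → ∃ δ : ℝ, 0 < δ ∧
      ∀ (Q : ℝ → ℝ) (M : ℝ), M ≤ 1 + δ →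
        StrictMonoOn Q (Set.Icc 0 1) →
        ContinuousOn Q (Set.Icc 0 1) →
        Set.MapsTo Q (Set.Icc 0 1) (Set.Icc 0 1) →
        Q 0 = 0 → Q 1 = 1 →
        (∀ x t : ℝ, 0 < t → x - t ∈ Set.Icc (0:ℝ) 1 → x ∈ Set.Icc (0:ℝ) 1 →
          x + t ∈ Set.Icc (0:ℝ) 1 →
          M⁻¹ ≤ (Q (x + t) - Q x) / (Q x - Q (x - t)) ∧
            (Q (x + t) - Q x) / (Q x - Q (x - t)) ≤ M) →
        ∀ x ∈ Set.Icc (0:ℝ) 1, |Q x - x| ≤ ε := by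
  intro ε hε
  refine ⟨min 1 (ε/6), by positivity, ?_⟩
  intro Q M hM hmono hcont hmaps hQ0 hQ1 hQS x hx
  have hδ1 : min 1 (ε/6) ≤ 1 := min_le_left _ _
  have hδε : min 1 (ε/6) ≤ ε/6 := min_le_right _ _
  -- `M ≥ 1`
  have hmem0 : (0:ℝ) ∈ Set.Icc (0:ℝ) 1 := by norm_num
  have hmem1 : (1:ℝ) ∈ Set.Icc (0:ℝ) 1 := by norm_num
  have hmemh : (1/2:ℝ) ∈ Set.Icc (0:ℝ) 1 := by norm_num
  have hM1 : 1 ≤ M := by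
    obtain ⟨h1, h2⟩ := hQS (1/2) (1/2) (by norm_num)
      (by norm_num) hmemh (by norm_num)
    have e1 : (1/2:ℝ) + 1/2 = 1 := by norm_num
    have e2 : (1/2:ℝ) - 1/2 = 0 := by norm_num
    rw [e1, e2] at h1 h2
    have hu : 0 < Q (1/2) - Q 0 := sub_pos.2 (hmono hmem0 hmemh (by norm_num))
    have hv : 0 < Q 1 - Q (1/2) := sub_pos.2 (hmono hmemh hmem1 (by norm_num))
    have hr : 0 < (Q 1 - Q (1/2)) / (Q (1/2) - Q 0) := by positivity
    have hMpos : 0 < M := lt_of_lt_of_le hr h2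
    have hMM : M⁻¹ ≤ M := le_trans h1 h2
    nlinarith [inv_mul_cancel₀ hMpos.ne', mul_le_mul_of_nonneg_right hMM hMpos.le]
  have hM2 : M ≤ 2 := by linarith
  have h1M : (0:ℝ) < 1 + M := by linarith
  -- midpoint gap bounds
  have gaps : ∀ a b : ℝ, 0 ≤ a → b ≤ 1 → a < b →
      Q b - Q a ≤ (Q ((a+b)/2) - Q a) * (1+M) ∧
      (Q ((a+b)/2) - Q a) * (1+M) ≤ M * (Q b - Q a) := by
    intro a b ha hb hab
    have ht : 0 < (b-a)/2 := by linarith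
    have hxa : (a+b)/2 - (b-a)/2 = a := by ring
    have hxb : (a+b)/2 + (b-a)/2 = b := by ring
    have hma : a ∈ Set.Icc (0:ℝ) 1 := ⟨ha, by linarith⟩
    have hmb : b ∈ Set.Icc (0:ℝ) 1 := ⟨by linarith, hb⟩
    have hmm : (a+b)/2 ∈ Set.Icc (0:ℝ) 1 := ⟨by linarith, by linarith⟩
    obtain ⟨h1, h2⟩ := hQS ((a+b)/2) ((b-a)/2) ht
      (by rw [hxa]; exact hma) hmm (by rw [hxb]; exact hmb)
    rw [hxa, hxb] at h1 h2
    have hu : 0 < Q ((a+b)/2) - Q a := sub_pos.2 (hmono hma hmm (by linarith))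
    have hv : 0 < Q b - Q ((a+b)/2) := sub_pos.2 (hmono hmm hmb (by linarith))
    have hvM : Q b - Q ((a+b)/2) ≤ M * (Q ((a+b)/2) - Q a) := by
      rw [div_le_iff₀ hu] at h2; linarith
    have huM : Q ((a+b)/2) - Q a ≤ M * (Q b - Q ((a+b)/2)) := by
      rw [le_div_iff₀ hu] at h1
      have hMpos : (0:ℝ) < M := by linarith
      have := mul_le_mul_of_nonneg_left h1 hMpos.le
      rw [← mul_assoc, mul_inv_cancel₀ hMpos.ne'] at this
      linarith
    constructor <;> nlinarith
  -- main dyadic induction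
  have key : ∀ n : ℕ,
      (∀ k : ℕ, k < 2^n → Q (((k:ℝ)+1)/2^n) - Q ((k:ℝ)/2^n) ≤ (2/3)^n) ∧
      (∀ k : ℕ, k ≤ 2^n →
        |Q ((k:ℝ)/2^n) - (k:ℝ)/2^n| ≤ 3*(M-1)/2 * (1 - (2/3)^n)) := by
    intro n
    induction n with
    | zero =>
      constructor
      · intro k hk
        interval_cases k
        norm_num [hQ0, hQ1]
      · intro k hk
        interval_cases k <;> norm_num [hQ0, hQ1]
    | succ n ih =>
      obtain ⟨IA, IB⟩ := ih
      have h2n : (0:ℝ) < 2^n := by positivity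
      have hMd : (0:ℝ) ≤ M - 1 := by linarith
      have main : ∀ j : ℕ, j < 2^n →
          Q ((2*(j:ℝ)+1)/2^(n+1)) - Q ((2*(j:ℝ))/2^(n+1)) ≤ (2/3)^(n+1) ∧
          Q ((2*(j:ℝ)+2)/2^(n+1)) - Q ((2*(j:ℝ)+1)/2^(n+1)) ≤ (2/3)^(n+1) ∧
          |Q ((2*(j:ℝ)+1)/2^(n+1)) - (2*(j:ℝ)+1)/2^(n+1)| ≤
            3*(M-1)/2 * (1 - (2/3)^(n+1)) := by
        intro j hj
        set a : ℝ := (j:ℝ)/2^n with ha_def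
        set b : ℝ := ((j:ℝ)+1)/2^n with hb_def
        have hja : ((j:ℝ)+1) ≤ 2^n := by exact_mod_cast Nat.succ_le_of_lt hj
        have ha0 : 0 ≤ a := by positivity
        have hb1 : b ≤ 1 := by rw [hb_def, div_le_one h2n]; exact hja
        have hab : a < b := by
          rw [ha_def, hb_def, div_lt_div_iff₀ h2n h2n]; nlinarith
        have ea : (2*(j:ℝ))/2^(n+1) = a := by
          rw [ha_def]; rw [pow_succ]; field_simp
        have eb : (2*(j:ℝ)+2)/2^(n+1) = b := by
          rw [hb_def]; rw [pow_succ]; field_simp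
        have em : (2*(j:ℝ)+1)/2^(n+1) = (a+b)/2 := by
          rw [ha_def, hb_def]; rw [pow_succ]; field_simp; ring
        obtain ⟨G1, G2⟩ := gaps a b ha0 hb1 hab
        have hL : Q b - Q a ≤ (2/3)^n := IA j hj
        have hu0 : 0 ≤ Q ((a+b)/2) - Q a :=
          (sub_pos.2 (hmono ⟨ha0, by linarith⟩ ⟨by linarith, by linarith⟩
            (by linarith))).le
        have hL0 : 0 ≤ Q b - Q a :=
          (sub_pos.2 (hmono ⟨ha0, by linarith⟩ ⟨by linarith, hb1⟩ hab)).le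
        obtain ⟨m1, m2, m3, m4⟩ :=
          qs_midarith M (Q b - Q a) (Q ((a+b)/2) - Q a) hM1 hM2 hL0 hu0 G1 G2
        have h23 : (0:ℝ) < (2/3:ℝ)^n := by positivity
        have hpow : ((2:ℝ)/3)^(n+1) = (2/3) * (2/3)^n := by rw [pow_succ]; ring
        rw [ea, eb, em]
        refine ⟨?_, ?_, ?_⟩
        · rw [hpow]; linarith
        · rw [hpow]; linarith
        · -- midpoint deviation
          have hja' : j + 1 ≤ 2^n := Nat.succ_le_of_lt hj
          have IBa := IB j (le_of_lt hj)
          have IBb := IB (j+1) hja'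
          rw [abs_le] at IBa IBb ⊢
          obtain ⟨IBa1, IBa2⟩ := IBa
          obtain ⟨IBb1, IBb2⟩ := IBb
          have ebc2 : (((j+1:ℕ)):ℝ)/2^n = b := by rw [hb_def]; push_cast; ring
          rw [ebc2] at IBb1 IBb2
          have hdev : (M-1)*(Q b - Q a) ≤ (M-1)*(2/3)^n :=
            mul_le_mul_of_nonneg_left hL hMd
          have hc : 3*(M-1)/2 * (1 - (2/3)^(n+1)) =
              3*(M-1)/2 * (1 - (2/3)^n) + (M-1)/2 * (2/3)^n := by
            rw [hpow]; ring
          constructor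
          · linarith
          · linarith
      constructor
      · intro k hk
        have hk' : k < 2^n * 2 := by rw [pow_succ] at hk; exact hk
        rcases Nat.even_or_odd k with ⟨j, hj⟩ | ⟨j, hj⟩
        · have hjn : j < 2^n := by omega
          have ek : (k:ℝ) = 2*(j:ℝ) := by rw [hj]; push_cast; ring
          rw [ek]
          exact (main j hjn).1
        · have hjn : j < 2^n := by omega
          have ek : (k:ℝ) = 2*(j:ℝ)+1 := by rw [hj]; push_cast; ring
          rw [ek]
          have e2 : (2*(j:ℝ)+1)+1 = 2*(j:ℝ)+2 := by ring
          rw [e2]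
          exact (main j hjn).2.1
      · intro k hk
        have hk' : k ≤ 2^n * 2 := by rw [pow_succ] at hk; exact hk
        rcases Nat.even_or_odd k with ⟨j, hj⟩ | ⟨j, hj⟩
        · have hjn : j ≤ 2^n := by omega
          have ek : ((k:ℝ))/2^(n+1) = (j:ℝ)/2^n := by
            rw [hj]; push_cast; rw [pow_succ]; field_simp; ring
          rw [ek]
          have hmono23 : ((2:ℝ)/3)^(n+1) ≤ (2/3)^n := by
            rw [pow_succ]
            nlinarith [pow_pos (show (0:ℝ) < 2/3 by norm_num) n]
          have h1 := IB j hjn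
          have hrhs : 3*(M-1)/2 * (1 - (2/3)^n) ≤
              3*(M-1)/2 * (1 - (2/3)^(n+1)) := by
            linarith [mul_nonneg hMd (sub_nonneg.2 hmono23)]
          linarith
        · have hjn : j < 2^n := by omega
          have ek : (k:ℝ) = 2*(j:ℝ)+1 := by rw [hj]; push_cast; ring
          rw [ek]
          exact (main j hjn).2.2
  -- choose the dyadic level
  obtain ⟨n, hn⟩ := exists_pow_lt_of_lt_one (by positivity : (0:ℝ) < ε/2)
    (by norm_num : (1/2:ℝ) < 1)
  obtain ⟨hx0, hx1⟩ := hx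
  have h2n : (0:ℝ) < 2^n := by positivity
  have h2n1 : (1:ℕ) ≤ 2^n := Nat.one_le_two_pow
  set k : ℕ := min (⌊x * 2^n⌋₊) (2^n - 1) with hk_def
  have hk1 : k + 1 ≤ 2^n := by omega
  have hk2 : k ≤ 2^n := by omega
  have hfl : (⌊x * 2^n⌋₊ : ℝ) ≤ x * 2^n := Nat.floor_le (by positivity)
  have hlow : (k:ℝ)/2^n ≤ x := by
    rw [div_le_iff₀ h2n]
    have : (k:ℝ) ≤ (⌊x * 2^n⌋₊ : ℝ) := Nat.cast_le.mpr (Nat.min_le_left _ _)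
    linarith
  have hhigh : x ≤ ((k:ℝ)+1)/2^n := by
    rw [le_div_iff₀ h2n]
    rcases le_or_gt (⌊x * 2^n⌋₊) (2^n - 1) with h | h
    · have hkeq : k = ⌊x * 2^n⌋₊ := min_eq_left h
      have := Nat.lt_floor_add_one (x * 2^n)
      rw [hkeq]; push_cast; linarith
    · have hkeq : k = 2^n - 1 := min_eq_right (by omega)
      have hck : ((k:ℝ)+1) = 2^n := by
        rw [hkeq]; push_cast [Nat.cast_sub h2n1]; ring
      rw [hck]; nlinarith
  have hma : (k:ℝ)/2^n ∈ Set.Icc (0:ℝ) 1 := by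
    constructor
    · positivity
    · rw [div_le_one h2n]; exact_mod_cast hk2
  have hmb : ((k:ℝ)+1)/2^n ∈ Set.Icc (0:ℝ) 1 := by
    constructor
    · positivity
    · rw [div_le_one h2n]
      have : ((k:ℝ)+1) = ((k+1:ℕ):ℝ) := by push_cast; ring
      rw [this]; exact_mod_cast hk1
  have hQlow : Q ((k:ℝ)/2^n) ≤ Q x := hmono.monotoneOn hma ⟨hx0, hx1⟩ hlow
  have hQhigh : Q x ≤ Q (((k:ℝ)+1)/2^n) := hmono.monotoneOn ⟨hx0, hx1⟩ hmb hhigh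
  have IBk := (key n).2 k hk2
  have IBk1 := (key n).2 (k+1) hk1
  have ek1 : (((k+1:ℕ)):ℝ) = (k:ℝ)+1 := by push_cast; ring
  rw [ek1] at IBk1
  rw [abs_le] at IBk IBk1 ⊢
  have hMd : 0 ≤ M - 1 := by linarith
  have hMδ : M - 1 ≤ ε/6 := by linarith
  have h23a : (0:ℝ) ≤ (2/3:ℝ)^n := by positivity
  have h23b : (2/3:ℝ)^n ≤ 1 := pow_le_one₀ (by norm_num) (by norm_num)
  have hbd : 3*(M-1)/2 * (1 - (2/3)^n) ≤ ε/4 := by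
    nlinarith [mul_nonneg hMd h23a]
  have hhalf : (1:ℝ)/2^n < ε/2 := by
    have e : ((1:ℝ)/2)^n = 1/2^n := by rw [div_pow, one_pow]
    linarith [e ▸ hn]
  have hgap : ((k:ℝ)+1)/2^n - (k:ℝ)/2^n = 1/2^n := by field_simp; ring
  constructor
  · linarith [IBk.1, IBk.2, IBk1.1, IBk1.2]
  · linarith [IBk.1, IBk.2, IBk1.1, IBk1.2]
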